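/- Consider the networked system ẋ = −αx + Wf(x) on a convex set Ω ⊆ ℝⁿ with α > 0, W ∈ ℝ^{n×n}, and f continuously differentiable with Jacobian J_f. Fix k ∈ [1,n]. If ‖J_f(x)‖₂² · ∑_{i=1}^k σ_i²(W) < α²k for all x ∈ Ω, then the Jacobian J(x) = −αIₙ + W J_f(x) satisfies λ₁(J(x)+J(x)ᵀ) + ⋯ + λ_k(J(x)+J(x)ᵀ) < 0 for all x ∈ Ω (i.e., μ₂(J(x)^{[k]}) < 0, so the system is k-contractive). -/

import Mathlib

open Matrix

/-- The `k`th multiplicative compound of a matrix: the matrix of all `k × k` minors,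
indexed by the sets of `k` row indices and `k` column indices (taken in increasing order). -/
noncomputable def mulCompound (k : ℕ) {n m : ℕ} (A : Matrix (Fin n) (Fin m) ℝ) :
    Matrix {s : Finset (Fin n) // s.card = k} {s : Finset (Fin m) // s.card = k} ℝ :=
  fun r c =>
    (A.submatrix (fun i => ((r.1.orderIsoOfFin r.2) i : Fin n))
      (fun j => ((c.1.orderIsoOfFin c.2) j : Fin m))).det

/-- The `k`th additive compound: the derivative at `ε = 0` of `(I + ε A)^{(k)}`. -/
noncomputable def addCompound (k : ℕ) {n : ℕ} (A : Matrix (Fin n) (Fin n) ℝ) :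
    Matrix {s : Finset (Fin n) // s.card = k} {s : Finset (Fin n) // s.card = k} ℝ :=
  fun r c => deriv (fun ε : ℝ => mulCompound k (1 + ε • A) r c) 0

open scoped Classical in
/-- Eigenvalues of a symmetric real matrix, in decreasing order (junk value `0` otherwise). -/
noncomputable def symEigsDesc {n : ℕ} (S : Matrix (Fin n) (Fin n) ℝ) : Fin n → ℝ :=
  if hS : S.IsHermitian then
    fun i => (hS.eigenvalues ∘ Tuple.sort hS.eigenvalues) i.rev
  else 0

/-- Singular values of a real matrix in decreasing order. -/
noncomputable def singVals {m p : ℕ} (A : Matrix (Fin m) (Fin p) ℝ) : Fin p → ℝ :=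
  fun i => Real.sqrt (symEigsDesc (Aᴴ * A) i)

/-- Largest eigenvalue of a (symmetric) real matrix. -/
noncomputable def lamMax {n : ℕ} (S : Matrix (Fin n) (Fin n) ℝ) : ℝ :=
  if hn : 0 < n then symEigsDesc S ⟨0, hn⟩ else 0


variable {n : ℕ}

def OrthoDot (u : Fin n → (Fin n → ℝ)) : Prop :=
  ∀ i j, u i ⬝ᵥ u j = if i = j then 1 else 0

lemma dot_sum' {ι : Type*} (s : Finset ι) (v : Fin n → ℝ) (f : ι → Fin n → ℝ) :
    v ⬝ᵥ (∑ i ∈ s, f i) = ∑ i ∈ s, v ⬝ᵥ f i := by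
  simp only [dotProduct, Finset.mul_sum, Finset.sum_apply]
  exact Finset.sum_comm

lemma sum_dot' {ι : Type*} (s : Finset ι) (v : Fin n → ℝ) (f : ι → Fin n → ℝ) :
    (∑ i ∈ s, f i) ⬝ᵥ v = ∑ i ∈ s, f i ⬝ᵥ v := by
  simp only [dotProduct, Finset.sum_mul, Finset.sum_apply]
  exact Finset.sum_comm

lemma mulVec_sum' {ι : Type*} (s : Finset ι) (A : Matrix (Fin n) (Fin n) ℝ)
    (f : ι → Fin n → ℝ) : A *ᵥ (∑ i ∈ s, f i) = ∑ i ∈ s, A *ᵥ f i := by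
  ext j
  simp only [mulVec, dotProduct, Finset.mul_sum, Finset.sum_apply]
  exact Finset.sum_comm

lemma dot_expand {m : ℕ} {u : Fin n → (Fin n → ℝ)} (hu : OrthoDot u)
    {emb : Fin m → Fin n} (hemb : Function.Injective emb) (c b : Fin m → ℝ) :
    (∑ j, c j • u (emb j)) ⬝ᵥ (∑ j, b j • u (emb j)) = ∑ j, c j * b j := by
  rw [sum_dot']
  have h1 : ∀ j : Fin m, (c j • u (emb j)) ⬝ᵥ (∑ l, b l • u (emb l)) = c j * b j := by
    intro j
    rw [dot_sum']
    have h2 : ∀ l : Fin m, (c j • u (emb j)) ⬝ᵥ (b l • u (emb l))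
        = c j * b l * (if j = l then 1 else 0) := by
      intro l
      rw [smul_dotProduct, dotProduct_smul, hu (emb j) (emb l)]
      simp only [hemb.eq_iff, smul_eq_mul]
      by_cases h : j = l <;> simp [h]
    simp only [h2]
    simp
  simp only [h1]

lemma exists_ne_zero_of_finrank_pos (V : Submodule ℝ (Fin n → ℝ))
    (h : 0 < Module.finrank ℝ V) : ∃ x ∈ V, x ≠ 0 := by
  rw [Module.finrank_pos_iff] at h
  obtain ⟨⟨x, hx⟩, h0⟩ := exists_ne (0 : V)
  exact ⟨x, hx, fun h' => h0 (by simp only [Subtype.ext_iff]; exact h')⟩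

lemma li_of_orthoDot {m : ℕ} {u : Fin n → (Fin n → ℝ)} (hu : OrthoDot u)
    {emb : Fin m → Fin n} (hemb : Function.Injective emb) :
    LinearIndependent ℝ (u ∘ emb) := by
  rw [Fintype.linearIndependent_iff]
  intro g hg i
  have h := dot_expand hu hemb g g
  rw [show (∑ j, g j • u (emb j)) = 0 from hg] at h
  simp only [zero_dotProduct] at h
  have h2 := (Finset.sum_eq_zero_iff_of_nonneg
    (fun j _ => mul_self_nonneg (g j))).1 h.symm i (Finset.mem_univ i)
  nlinarith [h2]

/-- Expansion of the quadratic form on a combination of eigenvectors. -/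
lemma quadform_expand {m : ℕ} {S : Matrix (Fin n) (Fin n) ℝ}
    {u : Fin n → (Fin n → ℝ)} (hu : OrthoDot u) {d : Fin n → ℝ}
    (heig : ∀ j, S *ᵥ u j = d j • u j)
    {emb : Fin m → Fin n} (hemb : Function.Injective emb) (c : Fin m → ℝ) :
    (∑ j, c j • u (emb j)) ⬝ᵥ (S *ᵥ (∑ j, c j • u (emb j)))
      = ∑ j, d (emb j) * (c j * c j) := by
  have h1 : S *ᵥ (∑ j, c j • u (emb j)) = ∑ j, (c j * d (emb j)) • u (emb j) := by
    rw [mulVec_sum']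
    refine Finset.sum_congr rfl fun j _ => ?_
    rw [mulVec_smul, heig, smul_smul, mul_comm]
  rw [h1, dot_expand hu hemb]
  refine Finset.sum_congr rfl fun j _ => by ring

lemma weyl_core {S T : Matrix (Fin n) (Fin n) ℝ}
    {u v : Fin n → (Fin n → ℝ)} (hu : OrthoDot u) (hv : OrthoDot v)
    {d e : Fin n → ℝ} (hd : Antitone d) (he : Antitone e)
    (hSu : ∀ j, S *ᵥ u j = d j • u j) (hTv : ∀ j, T *ᵥ v j = e j • v j)
    (hle : ∀ x, x ⬝ᵥ (S *ᵥ x) ≤ x ⬝ᵥ (T *ᵥ x)) :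
    ∀ i, d i ≤ e i := by
  intro i
  -- embeddings
  have hm1 : (i.val + 1) ≤ n := i.isLt
  set emb1 : Fin (i.val + 1) → Fin n := Fin.castLE hm1 with hemb1def
  have hemb1 : Function.Injective emb1 := Fin.castLE_injective hm1
  set emb2 : Fin (n - i.val) → Fin n := fun j => ⟨i.val + j.val, by omega⟩ with hemb2def
  have hemb2 : Function.Injective emb2 := by
    intro a b hab
    simp only [emb2, Fin.mk.injEq] at hab
    exact Fin.ext (by omega)
  set V : Submodule ℝ (Fin n → ℝ) := Submodule.span ℝ (Set.range (u ∘ emb1)) with hV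
  set U : Submodule ℝ (Fin n → ℝ) := Submodule.span ℝ (Set.range (v ∘ emb2)) with hU
  have hVr : Module.finrank ℝ V = i.val + 1 := by
    rw [hV, finrank_span_eq_card (li_of_orthoDot hu hemb1), Fintype.card_fin]
  have hUr : Module.finrank ℝ U = n - i.val := by
    rw [hU, finrank_span_eq_card (li_of_orthoDot hv hemb2), Fintype.card_fin]
  have hsup : Module.finrank ℝ ↥(V ⊔ U) ≤ n := by
    have := Submodule.finrank_le (V ⊔ U : Submodule ℝ (Fin n → ℝ))
    rwa [Module.finrank_pi, Fintype.card_fin] at this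
  have hinf : 0 < Module.finrank ℝ ↥(V ⊓ U) := by
    have := Submodule.finrank_sup_add_finrank_inf_eq V U
    omega
  obtain ⟨x, hxVU, hx0⟩ := exists_ne_zero_of_finrank_pos _ hinf
  obtain ⟨hxV, hxU⟩ := Submodule.mem_inf.1 hxVU
  obtain ⟨c, hc⟩ := (Submodule.mem_span_range_iff_exists_fun ℝ).1 hxV
  obtain ⟨b, hb⟩ := (Submodule.mem_span_range_iff_exists_fun ℝ).1 hxU
  simp only [Function.comp_apply] at hc hb
  have hq : x ⬝ᵥ x = ∑ j, c j * c j := by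
    rw [← hc]; rw [dot_expand hu hemb1]
  have hq' : x ⬝ᵥ x = ∑ j, b j * b j := by
    rw [← hb]; rw [dot_expand hv hemb2]
  have hqpos : 0 < x ⬝ᵥ x := by
    rcases lt_or_eq_of_le (Finset.sum_nonneg fun j (_ : j ∈ Finset.univ)
      => mul_self_nonneg (c j)) with h | h
    · rw [hq]; exact h
    · exfalso; apply hx0
      rw [← dotProduct_self_eq_zero (v := x), hq, ← h]
  have hS : x ⬝ᵥ (S *ᵥ x) = ∑ j, d (emb1 j) * (c j * c j) := by
    rw [← hc, quadform_expand hu hSu hemb1]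
  have hT : x ⬝ᵥ (T *ᵥ x) = ∑ j, e (emb2 j) * (b j * b j) := by
    rw [← hb, quadform_expand hv hTv hemb2]
  have hlow : d i * (x ⬝ᵥ x) ≤ x ⬝ᵥ (S *ᵥ x) := by
    rw [hS, hq, Finset.mul_sum]
    refine Finset.sum_le_sum fun j _ => ?_
    have : emb1 j ≤ i := by
      simp only [emb1]
      exact Fin.mk_le_mk.2 (by omega)
    exact mul_le_mul_of_nonneg_right (hd this) (mul_self_nonneg _)
  have hhigh : x ⬝ᵥ (T *ᵥ x) ≤ e i * (x ⬝ᵥ x) := by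
    rw [hT, hq', Finset.mul_sum]
    refine Finset.sum_le_sum fun j _ => ?_
    have : i ≤ emb2 j := by
      simp only [emb2]
      exact Fin.mk_le_mk.2 (by omega)
    exact mul_le_mul_of_nonneg_right (he this) (mul_self_nonneg _)
  have := hlow.trans ((hle x).trans hhigh)
  exact le_of_mul_le_mul_right (by linarith) hqpos

open scoped Classical in


lemma symEigsDesc_of_herm {S : Matrix (Fin n) (Fin n) ℝ} (hS : S.IsHermitian) :
    symEigsDesc S = fun i => (hS.eigenvalues ∘ Tuple.sort hS.eigenvalues) i.rev := by
  rw [symEigsDesc, dif_pos hS]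

lemma symEigsDesc_antitone (S : Matrix (Fin n) (Fin n) ℝ) : Antitone (symEigsDesc S) := by
  rw [symEigsDesc]
  split
  · intro i j hij
    exact Tuple.monotone_sort _ (Fin.rev_le_rev.2 hij)
  · exact antitone_const

lemma exists_desc_eigensystem {S : Matrix (Fin n) (Fin n) ℝ} (hS : S.IsHermitian) :
    ∃ u : Fin n → (Fin n → ℝ), OrthoDot u ∧ ∀ j, S *ᵥ u j = symEigsDesc S j • u j := by
  refine ⟨fun j => ⇑(hS.eigenvectorBasis ((Tuple.sort hS.eigenvalues) j.rev)), ?_, ?_⟩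
  · intro i j
    have horth := hS.eigenvectorBasis.orthonormal
    rw [orthonormal_iff_ite] at horth
    have h := horth ((Tuple.sort hS.eigenvalues) i.rev) ((Tuple.sort hS.eigenvalues) j.rev)
    rw [PiLp.inner_apply] at h
    have hiff : ((Tuple.sort hS.eigenvalues) i.rev = (Tuple.sort hS.eigenvalues) j.rev)
        ↔ i = j := by
      rw [Equiv.apply_eq_iff_eq, Fin.rev_inj]
    simp only [RCLike.inner_apply, conj_trivial] at h
    rw [dotProduct]
    simp only [hiff] at h
    rw [← h]
    exact Finset.sum_congr rfl fun _ _ => mul_comm _ _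
  · intro j
    rw [symEigsDesc_of_herm hS]
    exact hS.mulVec_eigenvectorBasis _

lemma symEigsDesc_unique {S : Matrix (Fin n) (Fin n) ℝ} (hS : S.IsHermitian)
    {u : Fin n → (Fin n → ℝ)} {d : Fin n → ℝ} (hu : OrthoDot u) (hd : Antitone d)
    (heig : ∀ j, S *ᵥ u j = d j • u j) : symEigsDesc S = d := by
  obtain ⟨w, hw, hweig⟩ := exists_desc_eigensystem hS
  funext i
  refine le_antisymm ?_ ?_
  · exact weyl_core hw hu (symEigsDesc_antitone S) hd hweig heig (fun x => le_refl _) i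
  · exact weyl_core hu hw hd (symEigsDesc_antitone S) heig hweig (fun x => le_refl _) i

lemma weyl_mono {S T : Matrix (Fin n) (Fin n) ℝ} (hS : S.IsHermitian) (hT : T.IsHermitian)
    (hle : ∀ x, x ⬝ᵥ (S *ᵥ x) ≤ x ⬝ᵥ (T *ᵥ x)) :
    ∀ i, symEigsDesc S i ≤ symEigsDesc T i := by
  obtain ⟨u, hu, hueig⟩ := exists_desc_eigensystem hS
  obtain ⟨w, hw, hweig⟩ := exists_desc_eigensystem hT
  exact weyl_core hu hw (symEigsDesc_antitone S) (symEigsDesc_antitone T) hueig hweig hle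

lemma herm_affine {M : Matrix (Fin n) (Fin n) ℝ} (hM : M.IsHermitian) (a b : ℝ) :
    (a • M + b • (1 : Matrix (Fin n) (Fin n) ℝ)).IsHermitian := by
  rw [Matrix.IsHermitian, conjTranspose_add, conjTranspose_smul, conjTranspose_smul,
    conjTranspose_one, hM.eq]
  simp [star_trivial]

lemma symEigsDesc_affine {M : Matrix (Fin n) (Fin n) ℝ} (hM : M.IsHermitian)
    (a b : ℝ) (ha : 0 ≤ a) :
    symEigsDesc (a • M + b • (1 : Matrix (Fin n) (Fin n) ℝ))
      = fun i => a * symEigsDesc M i + b := by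
  obtain ⟨u, hu, hueig⟩ := exists_desc_eigensystem hM
  refine symEigsDesc_unique (herm_affine hM a b) hu ?_ ?_
  · intro i j hij
    have := symEigsDesc_antitone M hij
    have := mul_le_mul_of_nonneg_left this ha
    dsimp only
    linarith
  · intro j
    rw [Matrix.add_mulVec, Matrix.smul_mulVec, Matrix.smul_mulVec,
      Matrix.one_mulVec, hueig, smul_smul, add_smul]

lemma rayleigh_bound {S : Matrix (Fin n) (Fin n) ℝ} (hS : S.IsHermitian) (hn : 0 < n)
    (x : Fin n → ℝ) : x ⬝ᵥ (S *ᵥ x) ≤ symEigsDesc S ⟨0, hn⟩ * (x ⬝ᵥ x) := by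
  obtain ⟨u, hu, hueig⟩ := exists_desc_eigensystem hS
  have hli : LinearIndependent ℝ u := by
    have := li_of_orthoDot hu (emb := id) fun a b h => h
    simpa using this
  have : Nonempty (Fin n) := ⟨⟨0, hn⟩⟩
  have hspan : Submodule.span ℝ (Set.range u) = ⊤ :=
    hli.span_eq_top_of_card_eq_finrank (by simp [Module.finrank_pi])
  have hx : x ∈ Submodule.span ℝ (Set.range u) := by rw [hspan]; trivial
  obtain ⟨c, hc⟩ := (Submodule.mem_span_range_iff_exists_fun ℝ).1 hx
  have hgid : Function.Injective (id : Fin n → Fin n) := fun a b h => h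
  have hx' : x = ∑ j, c j • u (id j) := hc.symm
  have hq : x ⬝ᵥ x = ∑ j, c j * c j := by rw [hx', dot_expand hu hgid]
  have hqf : x ⬝ᵥ (S *ᵥ x) = ∑ j, symEigsDesc S (id j) * (c j * c j) := by
    rw [hx', quadform_expand hu hueig hgid]
  rw [hqf, hq, Finset.mul_sum]
  refine Finset.sum_le_sum fun j _ => ?_
  exact mul_le_mul_of_nonneg_right
    (symEigsDesc_antitone S (Fin.mk_le_mk.2 (Nat.zero_le _))) (mul_self_nonneg _)

lemma multiset_ofFn' (d : Fin n → ℝ) : (Multiset.map d Finset.univ.val) = ↑(List.ofFn d) := by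
  rw [List.ofFn_eq_map]
  rfl

lemma sorted_unique {d e : Fin n → ℝ} (hd : Antitone d) (he : Antitone e)
    (h : Multiset.map d Finset.univ.val = Multiset.map e Finset.univ.val) : d = e := by
  rw [multiset_ofFn', multiset_ofFn', Multiset.coe_eq_coe] at h
  have hds : (List.ofFn d).Pairwise (· ≥ ·) := by
    rw [List.pairwise_ofFn]
    intro i j hij
    exact hd hij.le
  have hes : (List.ofFn e).Pairwise (· ≥ ·) := by
    rw [List.pairwise_ofFn]
    intro i j hij
    exact he hij.le
  exact List.ofFn_injective (h.eq_of_pairwise (fun a b _ _ h1 h2 => le_antisymm h2 h1) hds hes)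

lemma perm_univ_val (e : Equiv.Perm (Fin n)) :
    Multiset.map ⇑e Finset.univ.val = Finset.univ.val := by
  conv_rhs => rw [← Finset.map_univ_equiv e]
  rw [Finset.map_val]
  rfl

lemma symEigsDesc_multiset {S : Matrix (Fin n) (Fin n) ℝ} (hS : S.IsHermitian) :
    Multiset.map (symEigsDesc S) Finset.univ.val
      = Multiset.map hS.eigenvalues Finset.univ.val := by
  rw [symEigsDesc_of_herm hS]
  have : (fun i : Fin n => (hS.eigenvalues ∘ Tuple.sort hS.eigenvalues) i.rev)
      = hS.eigenvalues ∘ (Fin.revPerm.trans (Tuple.sort hS.eigenvalues)) := rfl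
  rw [this, ← Multiset.map_map, perm_univ_val]

lemma det_smul_one_sub {S : Matrix (Fin n) (Fin n) ℝ} (hS : S.IsHermitian) (x : ℝ) :
    det (x • (1 : Matrix (Fin n) (Fin n) ℝ) - S) = ∏ i, (x - hS.eigenvalues i) := by
  set U : Matrix (Fin n) (Fin n) ℝ := ↑(hS.eigenvectorUnitary) with hUdef
  have hUU : U * star U = 1 := (Matrix.mem_unitaryGroup_iff).mp (hS.eigenvectorUnitary).2
  have hD := hS.spectral_theorem
  have h1 : x • (1 : Matrix (Fin n) (Fin n) ℝ) = U * (x • 1) * star U := by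
    rw [Matrix.mul_smul, Matrix.smul_mul, mul_one, hUU]
  have h2 : x • (1 : Matrix (Fin n) (Fin n) ℝ) - S
      = U * (x • 1 - diagonal (RCLike.ofReal ∘ hS.eigenvalues)) * star U := by
    rw [Matrix.mul_sub, Matrix.sub_mul]
    rw [← h1]
    congr 1
  rw [h2, det_mul, det_mul]
  have hdet1 : det U * det (star U) = 1 := by
    rw [← det_mul, hUU, det_one]
  have h3 : (x • (1 : Matrix (Fin n) (Fin n) ℝ) - diagonal (RCLike.ofReal ∘ hS.eigenvalues))
      = diagonal (fun i => x - hS.eigenvalues i) := by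
    rw [← diagonal_one, ← diagonal_smul, diagonal_sub]
    congr 1
    funext i
    simp [RCLike.ofReal_real_eq_id]
  rw [h3, det_diagonal, mul_right_comm, hdet1, one_mul]

lemma symEigsDesc_eq_of_det {P Q : Matrix (Fin n) (Fin n) ℝ}
    (hP : P.IsHermitian) (hQ : Q.IsHermitian)
    (h : ∀ x : ℝ, x ≠ 0 → det (x • (1 : Matrix (Fin n) (Fin n) ℝ) - P)
      = det (x • (1 : Matrix (Fin n) (Fin n) ℝ) - Q)) :
    symEigsDesc P = symEigsDesc Q := by
  set p : Polynomial ℝ :=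
    (Multiset.map (fun a => Polynomial.X - Polynomial.C a)
      (Multiset.map hP.eigenvalues Finset.univ.val)).prod with hp
  set q : Polynomial ℝ :=
    (Multiset.map (fun a => Polynomial.X - Polynomial.C a)
      (Multiset.map hQ.eigenvalues Finset.univ.val)).prod with hq
  have heval : ∀ (R : Matrix (Fin n) (Fin n) ℝ) (hH : IsHermitian R) (x : ℝ), Polynomial.eval x
      ((Multiset.map (fun a => Polynomial.X - Polynomial.C a)
        (Multiset.map hH.eigenvalues Finset.univ.val)).prod)
      = ∏ i, (x - hH.eigenvalues i) := by
    intro R hH x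
    rw [Multiset.map_map, Polynomial.eval_multiset_prod, Multiset.map_map]
    rw [Finset.prod_eq_multiset_prod]
    congr 1
    apply Multiset.map_congr rfl
    intro i _
    simp
  have hpq : p = q := by
    have hsub : ∀ x : ℝ, x ≠ 0 → (p - q).IsRoot x := by
      intro x hx
      have hd := h x hx
      rw [det_smul_one_sub hP x, det_smul_one_sub hQ x] at hd
      simp only [Polynomial.IsRoot, Polynomial.eval_sub, hp, hq]
      rw [heval P hP x, heval Q hQ x, hd, sub_self]
    by_contra hne
    have : {x : ℝ | (p - q).IsRoot x}.Infinite := by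
      apply Set.Infinite.mono (fun x (hx : x ∈ {(0:ℝ)}ᶜ) => hsub x hx)
      exact (Set.finite_singleton (0:ℝ)).infinite_compl
    exact hne (sub_eq_zero.mp (Polynomial.eq_zero_of_infinite_isRoot _ this))
  have hroots : Multiset.map hP.eigenvalues Finset.univ.val
      = Multiset.map hQ.eigenvalues Finset.univ.val := by
    have := congrArg Polynomial.roots hpq
    rwa [hp, hq, Polynomial.roots_multiset_prod_X_sub_C,
      Polynomial.roots_multiset_prod_X_sub_C] at this
  apply sorted_unique (symEigsDesc_antitone P) (symEigsDesc_antitone Q)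
  rw [symEigsDesc_multiset hP, symEigsDesc_multiset hQ, hroots]

lemma conjT_eq_transpose (W : Matrix (Fin n) (Fin n) ℝ) : Wᴴ = Wᵀ := by
  ext i j
  simp [conjTranspose_apply]

lemma symEigsDesc_mul_comm (W : Matrix (Fin n) (Fin n) ℝ) :
    symEigsDesc (W * Wᵀ) = symEigsDesc (Wᵀ * W) := by
  have h1 : (W * Wᵀ).IsHermitian := by
    have := isHermitian_mul_conjTranspose_self W
    rwa [conjT_eq_transpose] at this
  have h2 : (Wᵀ * W).IsHermitian := by
    rw [Matrix.IsHermitian, conjTranspose_mul, conjT_eq_transpose W,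
      conjT_eq_transpose Wᵀ, transpose_transpose]
  apply symEigsDesc_eq_of_det h1 h2
  intro x hx
  have key : ∀ (A B : Matrix (Fin n) (Fin n) ℝ),
      det (x • (1 : Matrix (Fin n) (Fin n) ℝ) - A * B)
        = x ^ n * det (1 + ((-x⁻¹) • A) * B) := by
    intro A B
    have : x • (1 : Matrix (Fin n) (Fin n) ℝ) - A * B
        = x • (1 + ((-x⁻¹) • A) * B) := by
      rw [smul_add, Matrix.smul_mul, smul_smul]
      field_simp
      rw [sub_eq_add_neg]
      rw [neg_one_smul]
    rw [this, det_smul, Fintype.card_fin]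
  rw [key W Wᵀ, key Wᵀ W]
  congr 1
  rw [show ((-x⁻¹) • W) * Wᵀ = ((-x⁻¹) • W) * Wᵀ from rfl]
  have := det_one_add_mul_comm ((-x⁻¹) • W) Wᵀ
  rw [this]
  congr 1
  rw [Matrix.mul_smul, Matrix.smul_mul]

lemma symEigsDesc_nonneg {S : Matrix (Fin n) (Fin n) ℝ} (h : S.PosSemidef) (i : Fin n) :
    0 ≤ symEigsDesc S i := by
  rw [symEigsDesc_of_herm h.1]
  exact h.eigenvalues_nonneg _

lemma singVals_sq (V : Matrix (Fin n) (Fin n) ℝ) (i : Fin n) :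
    (singVals V i) ^ 2 = symEigsDesc (Vᵀ * V) i := by
  rw [singVals, ← conjT_eq_transpose V,
    Real.sq_sqrt (symEigsDesc_nonneg (posSemidef_conjTranspose_mul_self V) i)]

lemma dot_self_nonneg (v : Fin n → ℝ) : 0 ≤ v ⬝ᵥ v :=
  Finset.sum_nonneg fun j _ => mul_self_nonneg (v j)

lemma scalar_amgm {t a b c : ℝ} (ht : 0 < t)
    (e : 0 ≤ a - 2 * t * c + t ^ 2 * b) : 2 * c ≤ (1 / t) * a + t * b := by
  have h1 := mul_le_mul_of_nonneg_left e (le_of_lt (one_div_pos.mpr ht))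
  rw [mul_zero] at h1
  have h2 : 1 / t * (a - 2 * t * c + t ^ 2 * b) = 1 / t * a - 2 * c + t * b := by
    field_simp
  rw [h2] at h1
  linarith

lemma exists_t {Sk β2 α : ℝ} {k : ℕ} (hk : 1 ≤ k) (hα : 0 < α) (hS : 0 ≤ Sk) (hβ : 0 ≤ β2)
    (hkey : β2 * Sk < α ^ 2 * k) :
    ∃ t : ℝ, 0 < t ∧ 1 / t * Sk + t * β2 * k < 2 * α * k := by
  have hkpos : (0:ℝ) < k := by exact_mod_cast hk
  have hαk : 0 < α * k := mul_pos hα hkpos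
  rcases eq_or_lt_of_le hβ with hβ0 | hβpos
  · refine ⟨(Sk + 1) / (α * k), by positivity, ?_⟩
    rw [← hβ0]
    have h1 : 1 / ((Sk + 1) / (α * k)) * Sk < α * k := by
      rw [one_div_div, div_mul_eq_mul_div, div_lt_iff₀ (by linarith)]
      nlinarith
    nlinarith
  · rcases eq_or_lt_of_le hS with hS0 | hSpos
    · refine ⟨α / β2, by positivity, ?_⟩
      rw [← hS0]
      have h1 : α / β2 * β2 = α := by field_simp
      rw [mul_zero, zero_add, h1]
      nlinarith
    · obtain ⟨s, hs0, hs2⟩ : ∃ s : ℝ, 0 < s ∧ s ^ 2 = Sk :=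
        ⟨Real.sqrt Sk, Real.sqrt_pos.mpr hSpos, Real.sq_sqrt hS⟩
      obtain ⟨b, hb0, hb2⟩ : ∃ b : ℝ, 0 < b ∧ b ^ 2 = β2 * k :=
        ⟨Real.sqrt (β2 * k), Real.sqrt_pos.mpr (by positivity), Real.sq_sqrt (by positivity)⟩
      refine ⟨s / b, by positivity, ?_⟩
      rw [mul_assoc, ← hb2, ← hs2]
      have hval : 1 / (s / b) * s ^ 2 + s / b * b ^ 2 = 2 * (s * b) := by
        field_simp
        ring
      rw [hval]
      have hlt : (s * b) ^ 2 < (α * k) ^ 2 := by nlinarith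
      nlinarith [mul_pos hs0 hb0, hαk, hlt]

/-- Networked system `ẋ = -αx + W f(x)`: if `‖J_f(x)‖₂² ∑_{i=1}^k σ_i²(W) < α² k` on a
convex set `Ω`, then the Jacobian `J(x) = -αI + W J_f(x)` satisfies
`∑_{i=1}^k λ_i(J(x) + J(x)ᵀ) < 0` on `Ω` (so the system is `k`-contractive). -/
theorem stmt18 {n k : ℕ} (hk1 : 1 ≤ k) (hkn : k ≤ n)
    (α : ℝ) (hα : 0 < α) (W : Matrix (Fin n) (Fin n) ℝ)
    (Ω : Set (Fin n → ℝ)) (hΩ : Convex ℝ Ω)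
    (f : (Fin n → ℝ) → (Fin n → ℝ)) (hf : ContDiff ℝ 1 f)
    (Jf : (Fin n → ℝ) → Matrix (Fin n) (Fin n) ℝ)
    (hJf : ∀ x, HasFDerivAt f ((Jf x).mulVecLin.toContinuousLinearMap) x)
    (hsg : ∀ x ∈ Ω,
      (singVals (Jf x) ⟨0, hk1.trans hkn⟩) ^ 2 *
        ∑ i : Fin k, (singVals W (Fin.castLE hkn i)) ^ 2 < α ^ 2 * k) :
    ∀ x ∈ Ω,
      ∑ i : Fin k,
        symEigsDesc (((-α) • 1 + W * Jf x) + ((-α) • 1 + W * Jf x)ᵀ)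
          (Fin.castLE hkn i) < 0 := by
  intro x hx
  have hn : 0 < n := hk1.trans hkn
  set Jx := Jf x with hJx
  set A := W * Jx with hA
  set M := A + Aᵀ with hM
  -- Hermitian facts
  have hWWT : (W * Wᵀ).IsHermitian := by
    have := isHermitian_mul_conjTranspose_self W
    rwa [conjT_eq_transpose] at this
  have hJTJ : (Jxᵀ * Jx).IsHermitian := by
    rw [Matrix.IsHermitian, conjTranspose_mul, conjT_eq_transpose Jx,
      conjT_eq_transpose Jxᵀ, transpose_transpose]
  have hMh : M.IsHermitian := by
    rw [Matrix.IsHermitian, hM, conjTranspose_add, conjT_eq_transpose,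
      conjT_eq_transpose, transpose_transpose, add_comm]
  -- quantities
  set β2 : ℝ := symEigsDesc (Jxᵀ * Jx) ⟨0, hn⟩ with hβ2
  set Sk : ℝ := ∑ i : Fin k, symEigsDesc (Wᵀ * W) (Fin.castLE hkn i) with hSk
  have hβnn : 0 ≤ β2 := by
    rw [hβ2, ← conjT_eq_transpose Jx]
    exact symEigsDesc_nonneg (posSemidef_conjTranspose_mul_self Jx) _
  have hSnn : 0 ≤ Sk := by
    refine Finset.sum_nonneg fun i _ => ?_
    rw [← conjT_eq_transpose W]
    exact symEigsDesc_nonneg (posSemidef_conjTranspose_mul_self W) _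
  have hkey : β2 * Sk < α ^ 2 * k := by
    have h := hsg x hx
    rw [singVals_sq] at h
    have hsum : ∑ i : Fin k, (singVals W (Fin.castLE hkn i)) ^ 2 = Sk := by
      rw [hSk]
      exact Finset.sum_congr rfl fun i _ => singVals_sq W _
    rwa [hsum] at h
  obtain ⟨t, ht, hineq⟩ := exists_t hk1 hα hSnn hβnn hkey
  -- the comparison matrix
  set T := (1 / t) • (W * Wᵀ) + (t * β2) • (1 : Matrix (Fin n) (Fin n) ℝ) with hT
  have hTh : T.IsHermitian := herm_affine hWWT _ _
  -- quadratic form comparison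
  have hcomp : ∀ y, y ⬝ᵥ (M *ᵥ y) ≤ y ⬝ᵥ (T *ᵥ y) := by
    intro y
    set u := Wᵀ *ᵥ y with hu
    set w := Jx *ᵥ y with hw
    have h1 : y ⬝ᵥ (A *ᵥ y) = u ⬝ᵥ w := by
      rw [hA, ← mulVec_mulVec, Matrix.dotProduct_mulVec, hu, hw, Matrix.mulVec_transpose]
    have hAt : y ⬝ᵥ (Aᵀ *ᵥ y) = u ⬝ᵥ w := by
      rw [Matrix.mulVec_transpose, dotProduct_comm, ← Matrix.dotProduct_mulVec, h1]
    have hMy : y ⬝ᵥ (M *ᵥ y) = 2 * (u ⬝ᵥ w) := by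
      rw [hM, Matrix.add_mulVec, dotProduct_add, h1, hAt]
      ring
    have h2 : y ⬝ᵥ ((W * Wᵀ) *ᵥ y) = u ⬝ᵥ u := by
      rw [← mulVec_mulVec, Matrix.dotProduct_mulVec, hu, Matrix.mulVec_transpose]
    have h3 : y ⬝ᵥ ((Jxᵀ * Jx) *ᵥ y) = w ⬝ᵥ w := by
      rw [← mulVec_mulVec, Matrix.dotProduct_mulVec, Matrix.vecMul_transpose, hw]
    have h4 : w ⬝ᵥ w ≤ β2 * (y ⬝ᵥ y) := by
      rw [← h3, hβ2]
      exact rayleigh_bound hJTJ hn y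
    have hTy : y ⬝ᵥ (T *ᵥ y) = (1 / t) * (u ⬝ᵥ u) + (t * β2) * (y ⬝ᵥ y) := by
      rw [hT, Matrix.add_mulVec, Matrix.smul_mulVec, Matrix.smul_mulVec,
        Matrix.one_mulVec, dotProduct_add, dotProduct_smul, dotProduct_smul,
        smul_eq_mul, smul_eq_mul, h2]
    have hexp : 0 ≤ (u - t • w) ⬝ᵥ (u - t • w) := dot_self_nonneg _
    simp only [sub_dotProduct, dotProduct_sub, smul_dotProduct,
      dotProduct_smul, smul_eq_mul] at hexp
    have hscal : 2 * (u ⬝ᵥ w) ≤ (1 / t) * (u ⬝ᵥ u) + t * (w ⬝ᵥ w) :=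
      scalar_amgm ht (by nlinarith [hexp, dotProduct_comm w u])
    rw [hMy, hTy]
    have : t * (w ⬝ᵥ w) ≤ t * (β2 * (y ⬝ᵥ y)) :=
      mul_le_mul_of_nonneg_left h4 (le_of_lt ht)
    nlinarith [hscal, this]
  have hweyl : ∀ i, symEigsDesc M i ≤ symEigsDesc T i := weyl_mono hMh hTh hcomp
  have haffT : symEigsDesc T = fun i => (1 / t) * symEigsDesc (W * Wᵀ) i + t * β2 :=
    symEigsDesc_affine hWWT (1 / t) (t * β2) (by positivity)
  -- the matrix in the statement
  have hGM : ((-α) • 1 + A) + ((-α) • 1 + A)ᵀ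
      = (1 : ℝ) • M + (-(2 * α)) • (1 : Matrix (Fin n) (Fin n) ℝ) := by
    rw [transpose_add, transpose_smul, transpose_one, hM, one_smul]
    have : (-(2 * α)) • (1 : Matrix (Fin n) (Fin n) ℝ)
        = (-α) • 1 + (-α) • (1 : Matrix (Fin n) (Fin n) ℝ) := by
      rw [← add_smul]
      congr 1
      ring
    rw [this]
    abel
  have hGeig : ∀ i, symEigsDesc (((-α) • 1 + A) + ((-α) • 1 + A)ᵀ) i
      = symEigsDesc M i + (-(2 * α)) := by
    intro i
    rw [hGM, symEigsDesc_affine hMh 1 (-(2 * α)) zero_le_one]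
    ring
  -- final estimate
  have hbound : ∀ i : Fin k,
      symEigsDesc (((-α) • 1 + A) + ((-α) • 1 + A)ᵀ) (Fin.castLE hkn i)
        ≤ (1 / t) * symEigsDesc (Wᵀ * W) (Fin.castLE hkn i) + t * β2 - 2 * α := by
    intro i
    rw [hGeig]
    have h5 := hweyl (Fin.castLE hkn i)
    rw [haffT] at h5
    rw [symEigsDesc_mul_comm W] at h5
    simp only at h5
    linarith
  calc ∑ i : Fin k, symEigsDesc (((-α) • 1 + A) + ((-α) • 1 + A)ᵀ) (Fin.castLE hkn i)
      ≤ ∑ i : Fin k, ((1 / t) * symEigsDesc (Wᵀ * W) (Fin.castLE hkn i) + t * β2 - 2 * α) :=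
        Finset.sum_le_sum fun i _ => hbound i
    _ = (1 / t) * Sk + t * β2 * k - 2 * α * k := by
        rw [hSk, Finset.mul_sum]
        rw [Finset.sum_sub_distrib, Finset.sum_add_distrib, Finset.sum_const,
          Finset.sum_const, Finset.card_univ, Fintype.card_fin]
        push_cast
        ring
    _ < 0 := by linarith [hineq]
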